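/- On ℝ⁶ with coordinates (q₀,q₁,q₂,q₃,p⁰,p¹), presymplectic form Ω = dq₀∧dp⁰ + dq₁∧dp¹, and Hamiltonian H = q₁p⁰ + q₂p¹ - ½μq₂² - ρq₀ (μ ≠ 0), the kernel of the map X ↦ i(X)Ω - dH restricted to vector fields tangent to the submanifold W₀ = {p⁰ = -μq₃, p¹ = μq₂} contains exactly one vector field, namely X_{LH} = q₁∂/∂q₀ + q₂∂/∂q₁ + q₃∂/∂q₂ - (ρ/μ)∂/∂q₃ + ρ∂/∂p⁰ - p⁰∂/∂p¹. -/

import Mathlib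

noncomputable section

/-! The Skinner–Rusk space `W = ℝ⁶` of the homogeneous deformed elastic beam, with
coordinates `(q₀, q₁, q₂, q₃, p⁰, p¹)` indexed by `0, ..., 5`. -/

/-- The presymplectic form `Ω = dq₀ ∧ dp⁰ + dq₁ ∧ dp¹` on `ℝ⁶`. -/
def beamOmega : (Fin 6 → ℝ) → (Fin 6 → ℝ) → (Fin 6 → ℝ) → ℝ :=
  fun _ u v => u 0 * v 4 - u 4 * v 0 + u 1 * v 5 - u 5 * v 1

/-- The Hamiltonian `H = q₁p⁰ + q₂p¹ - ½μq₂² - ρq₀`. -/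
def beamH (μ ρ : ℝ) : (Fin 6 → ℝ) → ℝ :=
  fun x => x 1 * x 4 + x 2 * x 5 - (1 / 2) * μ * (x 2) ^ 2 - ρ * x 0

/-- The vector field
`X_LH = q₁∂q₀ + q₂∂q₁ + q₃∂q₂ - (ρ/μ)∂q₃ + ρ∂p⁰ - p⁰∂p¹`. -/
def beamXLH (μ ρ : ℝ) : (Fin 6 → ℝ) → (Fin 6 → ℝ) :=
  fun x => ![x 1, x 2, x 3, -(ρ / μ), ρ, -(x 4)]

/-- The submanifold `W₀ = {p⁰ = -μq₃, p¹ = μq₂}`, the graph of the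
Legendre–Ostrogradsky map. -/
def beamW0 (μ : ℝ) : Set (Fin 6 → ℝ) :=
  {x | x 4 = -(μ * x 3) ∧ x 5 = μ * x 2}

lemma vec6_val4 (a b c d e f : ℝ) : ![a, b, c, d, e, f] 4 = e := rfl
lemma vec6_val5 (a b c d e f : ℝ) : ![a, b, c, d, e, f] 5 = f := rfl

lemma beamH_fderiv (μ ρ : ℝ) (x v : Fin 6 → ℝ) :
    fderiv ℝ (beamH μ ρ) x v =
      x 4 * v 1 + x 1 * v 4 + x 5 * v 2 + x 2 * v 5 - μ * x 2 * v 2 - ρ * v 0 := by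
  have p : ∀ i : Fin 6, HasFDerivAt (fun y : Fin 6 → ℝ => y i)
      (ContinuousLinearMap.proj i : (Fin 6 → ℝ) →L[ℝ] ℝ) x :=
    fun i => (ContinuousLinearMap.proj i : (Fin 6 → ℝ) →L[ℝ] ℝ).hasFDerivAt
  have H := ((((p 1).mul (p 4)).add ((p 2).mul (p 5))).sub
      (((hasFDerivAt_const ((1:ℝ)/2*μ) x).mul ((p 2).mul (p 2))))).sub
      ((hasFDerivAt_const ρ x).mul (p 0))
  have hfun : beamH μ ρ =
      fun y : Fin 6 → ℝ => y 1 * y 4 + y 2 * y 5 - (1:ℝ)/2*μ * (y 2 * y 2) - ρ * y 0 := by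
    funext y; simp only [beamH]; ring
  rw [hfun, (show HasFDerivAt (fun y : Fin 6 → ℝ => y 1 * y 4 + y 2 * y 5 - (1:ℝ)/2*μ * (y 2 * y 2) - ρ * y 0) _ x from H).fderiv]
  simp [ContinuousLinearMap.proj_apply]
  ring

/-- Among vector fields tangent to `W₀` satisfying `i(X)Ω = dH` on `W₀`, there is exactly
one, namely `X_LH`. -/
theorem beam_unique_dynamical_vector_field (μ ρ : ℝ) (hμ : μ ≠ 0) :
    ((∀ x ∈ beamW0 μ, ∀ v : Fin 6 → ℝ,
        beamOmega x (beamXLH μ ρ x) v = fderiv ℝ (beamH μ ρ) x v) ∧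
      (∀ x ∈ beamW0 μ,
        (beamXLH μ ρ x) 4 + μ * (beamXLH μ ρ x) 3 = 0 ∧
        (beamXLH μ ρ x) 5 - μ * (beamXLH μ ρ x) 2 = 0)) ∧
    ∀ X : (Fin 6 → ℝ) → (Fin 6 → ℝ),
      (∀ x ∈ beamW0 μ, ∀ v : Fin 6 → ℝ,
        beamOmega x (X x) v = fderiv ℝ (beamH μ ρ) x v) →
      (∀ x ∈ beamW0 μ, (X x) 4 + μ * (X x) 3 = 0 ∧ (X x) 5 - μ * (X x) 2 = 0) →
      ∀ x ∈ beamW0 μ, X x = beamXLH μ ρ x := by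
  refine ⟨⟨?_, ?_⟩, ?_⟩
  · intro x hx v
    obtain ⟨h4, h5⟩ := hx
    rw [beamH_fderiv]
    simp only [beamOmega, beamXLH, Matrix.cons_val_zero, Matrix.cons_val_one, Matrix.head_cons,
      Matrix.cons_val_succ, vec6_val4, vec6_val5]
    rw [h5]
    ring
  · intro x hx
    simp only [beamXLH]
    constructor
    · show ρ + μ * -(ρ / μ) = 0
      field_simp; ring
    · show -(x 4) - μ * x 3 = 0
      rw [hx.1]; ring
  · intro X hΩ htan x hx
    obtain ⟨h4, h5⟩ := hx
    have key : ∀ v : Fin 6 → ℝ,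
        X x 0 * v 4 - X x 4 * v 0 + X x 1 * v 5 - X x 5 * v 1 =
        x 4 * v 1 + x 1 * v 4 + x 5 * v 2 + x 2 * v 5 - μ * x 2 * v 2 - ρ * v 0 := by
      intro v
      have := hΩ x ⟨h4, h5⟩ v
      rw [beamH_fderiv] at this
      simpa [beamOmega] using this
    have e0 : X x 0 = x 1 := by simpa [Pi.single_apply] using key (Pi.single 4 1)
    have e1 : X x 1 = x 2 := by
      have := key (Pi.single 5 1); simp [Pi.single_apply] at this; linarith
    have e4 : X x 4 = ρ := by
      have := key (Pi.single 0 1); simp [Pi.single_apply] at this; linarith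
    have e5 : X x 5 = -(x 4) := by
      have := key (Pi.single 1 1); simp [Pi.single_apply] at this; linarith
    obtain ⟨t1, t2⟩ := htan x ⟨h4, h5⟩
    have e3 : X x 3 = -(ρ / μ) := by
      rw [e4] at t1; field_simp at t1 ⊢; linarith
    have e2 : X x 2 = x 3 := by
      rw [e5, h4] at t2
      have : μ * x 3 = μ * X x 2 := by linarith
      exact (mul_left_cancel₀ hμ this).symm
    funext i
    fin_cases i <;>
      simp [beamXLH, Matrix.cons_val_succ, vec6_val4, vec6_val5, e0, e1, e2, e3, e4, e5]
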